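/- For any subset Λ ⊆ I_N with σₙ > 0 for n ∈ Λ, the thresholded projection P_Λ satisfies ‖f − P_Λ f‖ ≤ ‖f − T_N z‖ + (max_{n∈I_N∖Λ} √σₙ) ‖z‖ for every z ∈ ℂᴺ. -/

import Mathlib

open scoped ComplexInnerProductSpace

lemma aux_inner_sum_sum {H : Type*} [NormedAddCommGroup H] [InnerProductSpace ℂ H]
    {N : ℕ} (ξ : Fin N → H) (τ : Fin N → ℂ)
    (hxi : ∀ m n, ⟪ξ m, ξ n⟫ = if m = n then τ n else 0)
    (S : Finset (Fin N)) (a b : Fin N → ℂ) :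
    ⟪∑ m ∈ S, a m • ξ m, ∑ n ∈ S, b n • ξ n⟫
      = ∑ n ∈ S, starRingEnd ℂ (a n) * b n * τ n := by
  rw [sum_inner]
  refine Finset.sum_congr rfl fun m hm => ?_
  rw [inner_smul_left, inner_sum]
  have h2 : ∑ n ∈ S, ⟪ξ m, b n • ξ n⟫ = b m * τ m := by
    have h3 : ∀ n ∈ S, ⟪ξ m, b n • ξ n⟫ = if m = n then b n * τ n else 0 := by
      intro n _; rw [inner_smul_right, hxi]; split <;> simp
    rw [Finset.sum_congr rfl h3, Finset.sum_ite_eq S m fun n => b n * τ n, if_pos hm]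
  rw [h2]; ring

lemma aux_xi_inner {H : Type*} [NormedAddCommGroup H] [InnerProductSpace ℂ H]
    {N : ℕ} (φ : Fin N → H) (σ : Fin N → ℝ)
    (v : Fin N → EuclideanSpace ℂ (Fin N)) (hv : Orthonormal ℂ v)
    (G : Matrix (Fin N) (Fin N) ℂ) (hG : ∀ m k, G m k = ⟪φ m, φ k⟫)
    (heig : ∀ n i, G.mulVec (fun j => v n j) i = (σ n : ℂ) * v n i)
    (T : EuclideanSpace ℂ (Fin N) → H) (hT : ∀ z, T z = ∑ n, z n • φ n)
    (ξ : Fin N → H) (hξ : ∀ n, ξ n = T (v n)) (m n : Fin N) :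
    ⟪ξ m, ξ n⟫ = if m = n then (σ n : ℂ) else 0 := by
  have key : ⟪ξ m, ξ n⟫ = (σ n : ℂ) * ⟪v m, v n⟫ := by
    rw [hξ, hξ, hT, hT, sum_inner]
    have h1 : ∀ j, ⟪(v m) j • φ j, ∑ k, (v n) k • φ k⟫
        = starRingEnd ℂ ((v m) j) * ((σ n : ℂ) * (v n) j) := by
      intro j
      rw [inner_smul_left, inner_sum]
      congr 1
      have : ∀ k, ⟪φ j, (v n) k • φ k⟫ = G j k * (v n) k := by
        intro k; rw [inner_smul_right, hG]; ring
      rw [Finset.sum_congr rfl fun k _ => this k]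
      have := heig n j
      rw [Matrix.mulVec, dotProduct] at this
      exact this
    rw [Finset.sum_congr rfl fun j _ => h1 j]
    simp only [PiLp.inner_apply, RCLike.inner_apply, Finset.mul_sum]
    congr 1; ext j; ring
  rw [key, orthonormal_iff_ite.mp hv m n]
  by_cases h : m = n <;> simp [h]

theorem stmt_6 {H : Type*} [NormedAddCommGroup H] [InnerProductSpace ℂ H]
    {N : ℕ} (φ : Fin N → H) (σ : Fin N → ℝ)
    (v : Fin N → EuclideanSpace ℂ (Fin N)) (hv : Orthonormal ℂ v)
    (G : Matrix (Fin N) (Fin N) ℂ) (hG : ∀ m k, G m k = ⟪φ m, φ k⟫)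
    (heig : ∀ n i, G.mulVec (fun j => v n j) i = (σ n : ℂ) * v n i)
    (T : EuclideanSpace ℂ (Fin N) → H) (hT : ∀ z, T z = ∑ n, z n • φ n)
    (ξ : Fin N → H) (hξ : ∀ n, ξ n = T (v n))
    (Λ : Finset (Fin N)) (hσpos : ∀ n ∈ Λ, 0 < σ n)
    (hne : (Finset.univ \ Λ).Nonempty)
    (f : H) (z : EuclideanSpace ℂ (Fin N)) :
    ‖f - ∑ n ∈ Λ, (⟪ξ n, f⟫ / (σ n : ℂ)) • ξ n‖ ≤
      ‖f - T z‖ + ((Finset.univ \ Λ).sup' hne fun n => Real.sqrt (σ n)) * ‖z‖ := by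
  classical
  have hxi : ∀ m n, ⟪ξ m, ξ n⟫ = if m = n then (σ n : ℂ) else 0 :=
    aux_xi_inner φ σ v hv G hG heig T hT ξ hξ
  have hσ0 : ∀ n, 0 ≤ σ n := by
    intro n
    have h := hxi n n
    rw [if_pos rfl] at h
    have h2 : RCLike.re (⟪ξ n, ξ n⟫ : ℂ) = σ n := by rw [h]; simp
    rw [← h2]; exact inner_self_nonneg
  haveI : Nonempty (Fin N) := ⟨hne.choose⟩
  set M := (Finset.univ \ Λ).sup' hne fun n => Real.sqrt (σ n) with hM
  have hM0 : 0 ≤ M := le_trans (Real.sqrt_nonneg (σ hne.choose))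
    (Finset.le_sup' (fun n => Real.sqrt (σ n)) hne.choose_spec)
  have hMsq : ∀ n ∈ Finset.univ \ Λ, σ n ≤ M ^ 2 := by
    intro n hn
    have h1 : Real.sqrt (σ n) ≤ M := Finset.le_sup' (fun n => Real.sqrt (σ n)) hn
    calc σ n = Real.sqrt (σ n) ^ 2 := (Real.sq_sqrt (hσ0 n)).symm
      _ ≤ M ^ 2 := pow_le_pow_left₀ (Real.sqrt_nonneg _) h1 2
  -- orthonormal basis from v
  let b0 := basisOfLinearIndependentOfCardEqFinrank hv.linearIndependent
    (by simp [finrank_euclideanSpace])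
  have hb0 : ⇑b0 = v := coe_basisOfLinearIndependentOfCardEqFinrank _ _
  let b : OrthonormalBasis (Fin N) ℂ (EuclideanSpace ℂ (Fin N)) :=
    b0.toOrthonormalBasis (by rw [hb0]; exact hv)
  have hb : ∀ i, b i = v i := by
    intro i
    have : ⇑b = ⇑b0 := by
      simp only [b, Module.Basis.coe_toOrthonormalBasis]
    rw [this, hb0]
  set c : Fin N → ℂ := fun n => ⟪v n, z⟫ with hc
  have hzrepr : ∑ n, c n • v n = z := by
    have h := b.sum_repr' z
    calc ∑ n, c n • v n = ∑ n, ⟪b n, z⟫ • b n := by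
          refine Finset.sum_congr rfl fun n _ => ?_; rw [hb]
      _ = z := b.sum_repr' z
  have hznorm : ‖z‖ ^ 2 = ∑ n, ‖c n‖ ^ 2 := by
    have h1 : ‖z‖ = ‖b.repr z‖ := (b.repr.norm_map z).symm
    rw [h1, EuclideanSpace.norm_eq, Real.sq_sqrt (by positivity)]
    refine Finset.sum_congr rfl fun n _ => ?_
    rw [b.repr_apply_apply, hb]
  have hTz : T z = ∑ n, c n • ξ n := by
    rw [hT]
    have hcoord : ∀ j, z j = ∑ n, c n * v n j := by
      intro j
      conv_lhs => rw [← hzrepr]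
      induction (Finset.univ : Finset (Fin N)) using Finset.induction with
      | empty => simp
      | insert a s h ih => rw [Finset.sum_insert h, Finset.sum_insert h, ← ih]; rfl
    calc ∑ j, z j • φ j = ∑ j, (∑ n, c n * v n j) • φ j := by
          exact Finset.sum_congr rfl fun j _ => by rw [hcoord]
      _ = ∑ j, ∑ n, (c n * v n j) • φ j := by
          exact Finset.sum_congr rfl fun j _ => Finset.sum_smul
      _ = ∑ n, ∑ j, (c n * v n j) • φ j := Finset.sum_comm
      _ = ∑ n, c n • ξ n := by
          refine Finset.sum_congr rfl fun n _ => ?_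
          rw [hξ, hT, Finset.smul_sum]
          exact Finset.sum_congr rfl fun j _ => (smul_smul _ _ _).symm
  set P : H := ∑ n ∈ Λ, (⟪ξ n, f⟫ / (σ n : ℂ)) • ξ n with hP
  set g : H := ∑ n ∈ Λ, c n • ξ n with hg
  -- orthogonality of residual to each ξ m, m ∈ Λ
  have horth : ∀ m ∈ Λ, ⟪ξ m, f - P⟫ = 0 := by
    intro m hm
    rw [inner_sub_right, hP, inner_sum]
    have h3 : ∀ n ∈ Λ, ⟪ξ m, (⟪ξ n, f⟫ / (σ n : ℂ)) • ξ n⟫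
        = if m = n then ⟪ξ n, f⟫ / (σ n : ℂ) * (σ n : ℂ) else 0 := by
      intro n _; rw [inner_smul_right, hxi]; split <;> simp
    rw [Finset.sum_congr rfl h3, Finset.sum_ite_eq Λ m, if_pos hm,
      div_mul_cancel₀ _ (by exact_mod_cast (hσpos m hm).ne')]
    ring
  have horthPg : ⟪P - g, f - P⟫ = 0 := by
    have : P - g = ∑ m ∈ Λ, ((⟪ξ m, f⟫ / (σ m : ℂ)) - c m) • ξ m := by
      rw [hP, hg, ← Finset.sum_sub_distrib]
      exact Finset.sum_congr rfl fun m _ => (sub_smul _ _ _).symm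
    rw [this, sum_inner]
    refine Finset.sum_eq_zero fun m hm => ?_
    rw [inner_smul_left, horth m hm, mul_zero]
  have h1 : ‖f - P‖ ≤ ‖f - g‖ := by
    have hfg : f - g = (f - P) + (P - g) := by abel
    have hortho : ⟪f - P, P - g⟫ = 0 := by
      rw [← inner_conj_symm, horthPg, map_zero]
    have hsq := norm_add_sq_eq_norm_sq_add_norm_sq_of_inner_eq_zero (f - P) (P - g) hortho
    rw [← hfg] at hsq
    nlinarith [norm_nonneg (f - P), norm_nonneg (f - g), norm_nonneg (P - g)]
  have h2 : ‖T z - g‖ ≤ M * ‖z‖ := by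
    have hw : T z - g = ∑ n ∈ Finset.univ \ Λ, c n • ξ n := by
      rw [hTz, hg, Finset.sum_sdiff_eq_sub (Finset.subset_univ Λ)]
    have hnormsq : ‖T z - g‖ ^ 2 = ∑ n ∈ Finset.univ \ Λ, ‖c n‖ ^ 2 * σ n := by
      have hin := aux_inner_sum_sum ξ (fun n => (σ n : ℂ)) hxi (Finset.univ \ Λ) c c
      rw [← hw] at hin
      have hre : (‖T z - g‖ : ℝ) ^ 2 = RCLike.re (⟪T z - g, T z - g⟫ : ℂ) :=
        (@inner_self_eq_norm_sq ℂ _ _ _ _ (T z - g)).symm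
      rw [hre, hin]
      rw [map_sum]
      refine Finset.sum_congr rfl fun n _ => ?_
      have : starRingEnd ℂ (c n) * c n * (σ n : ℂ) = (((‖c n‖ ^ 2 * σ n : ℝ)) : ℂ) := by
        rw [RCLike.conj_mul, Complex.ofReal_mul]; norm_num
      rw [this]
      exact Complex.ofReal_re _
    have hbound : ‖T z - g‖ ^ 2 ≤ (M * ‖z‖) ^ 2 := by
      rw [hnormsq]
      calc ∑ n ∈ Finset.univ \ Λ, ‖c n‖ ^ 2 * σ n
          ≤ ∑ n ∈ Finset.univ \ Λ, ‖c n‖ ^ 2 * M ^ 2 := by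
            refine Finset.sum_le_sum fun n hn => ?_
            exact mul_le_mul_of_nonneg_left (hMsq n hn) (by positivity)
        _ = M ^ 2 * ∑ n ∈ Finset.univ \ Λ, ‖c n‖ ^ 2 := by
            rw [Finset.mul_sum]; exact Finset.sum_congr rfl fun n _ => by ring
        _ ≤ M ^ 2 * ∑ n, ‖c n‖ ^ 2 := by
            refine mul_le_mul_of_nonneg_left ?_ (by positivity)
            exact Finset.sum_le_sum_of_subset_of_nonneg (Finset.sdiff_subset)
              (fun n _ _ => by positivity)
        _ = (M * ‖z‖) ^ 2 := by rw [← hznorm]; ring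
    nlinarith [norm_nonneg (T z - g), mul_nonneg hM0 (norm_nonneg z)]
  calc ‖f - P‖ ≤ ‖f - g‖ := h1
    _ ≤ ‖f - T z‖ + ‖T z - g‖ := by
        have : f - g = (f - T z) + (T z - g) := by abel
        rw [this]; exact norm_add_le _ _
    _ ≤ ‖f - T z‖ + M * ‖z‖ := by linarith
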